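/- Let ρ > 0 and let x ∈ ℝⁿ_↓ not be a scalar multiple of the all-ones vector e. If xₙ > α̲/(ρ‖x‖₁), then the unit vector w* := w̲/‖w̲‖₂, where w̲ = x − (α̲/(ρ‖x‖₁))e, is a global minimizer of ½wᵀA_{ρ,x}w over S^{n-1}_+, and prox_{(1/ρ)h₂}(x) = {⟨x, w*⟩ w*}. -/

import Mathlib

/-- The ℓ₁ norm on `ℝⁿ`. -/
noncomputable def l1norm {n : ℕ} (x : Fin n → ℝ) : ℝ := ∑ i, |x i|

/-- The ℓ₂ norm on `ℝⁿ`. -/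
noncomputable def l2norm {n : ℕ} (x : Fin n → ℝ) : ℝ := Real.sqrt (∑ i, (x i) ^ 2)

-- `h₂(x) = (‖x‖₁/‖x‖₂)²` for `x ≠ 0`, and `h₂(0) = 0`.
open Classical in
noncomputable def h2 {n : ℕ} (x : Fin n → ℝ) : ℝ :=
  if x = 0 then 0 else (l1norm x / l2norm x) ^ 2

/-- `prox_{(1/ρ) f}(z)`: the set of global minimizers of `(ρ/2)‖u - z‖₂² + f(u)`. -/
noncomputable def proxSet {n : ℕ} (ρ : ℝ) (f : (Fin n → ℝ) → ℝ) (z : Fin n → ℝ) :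
    Set (Fin n → ℝ) :=
  {u | ∀ v : Fin n → ℝ,
    ρ / 2 * (∑ i, (u i - z i) ^ 2) + f u ≤ ρ / 2 * (∑ i, (v i - z i) ^ 2) + f v}

private lemma aux_hE (ρ t Nv sstar pstar r s p : ℝ)
    (keyA : 2 * sstar = ρ * t * pstar) (keyB : pstar = t * sstar + Nv) :
    2 * s ^ 2 - ρ * p ^ 2 - (2 * sstar ^ 2 - ρ * pstar ^ 2) * r ^ 2 =
      ρ * ((t * s + Nv * r) ^ 2 - p ^ 2) + (2 - ρ * t ^ 2) * (s - sstar * r) ^ 2 := by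
  have hN : Nv = pstar - t * sstar := by linarith
  rw [hN]
  linear_combination (2 * s * r - 2 * sstar * r ^ 2) * keyA

private lemma aux_ineq (ρ t Nv sstar pstar r s p : ℝ)
    (hρ : 0 < ρ) (htpos : 0 < t) (hNvpos : 0 < Nv) (hc : ρ * t ^ 2 < 2)
    (keyA : 2 * sstar = ρ * t * pstar) (keyB : pstar = t * sstar + Nv)
    (hr : 0 ≤ r) (hs : 0 ≤ s) (hp : 0 ≤ p) (hcs : (p - t * s) ^ 2 ≤ Nv ^ 2 * r ^ 2) :
    (2 * sstar ^ 2 - ρ * pstar ^ 2) * r ^ 2 ≤ 2 * s ^ 2 - ρ * p ^ 2 := by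
  have h1 : p ≤ t * s + Nv * r := by
    nlinarith [mul_nonneg hNvpos.le hr]
  have h2 : (0:ℝ) ≤ t * s + Nv * r + p := by
    have := mul_nonneg htpos.le hs; have := mul_nonneg hNvpos.le hr; linarith
  have hterm1 : (0:ℝ) ≤ (t * s + Nv * r) ^ 2 - p ^ 2 := by
    nlinarith [mul_nonneg (by linarith : (0:ℝ) ≤ t * s + Nv * r - p) h2]
  have f1 : (0:ℝ) ≤ ρ * ((t * s + Nv * r) ^ 2 - p ^ 2) := mul_nonneg hρ.le hterm1
  have f2 : (0:ℝ) ≤ (2 - ρ * t ^ 2) * (s - sstar * r) ^ 2 :=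
    mul_nonneg (by linarith) (sq_nonneg _)
  linarith [aux_hE ρ t Nv sstar pstar r s p keyA keyB]

private lemma aux_eq (ρ t Nv sstar pstar r s p : ℝ)
    (hρ : 0 < ρ) (htpos : 0 < t) (hNvpos : 0 < Nv) (hc : ρ * t ^ 2 < 2)
    (keyA : 2 * sstar = ρ * t * pstar) (keyB : pstar = t * sstar + Nv)
    (hr : 0 < r) (hs : 0 ≤ s) (hp : 0 ≤ p) (hcs : (p - t * s) ^ 2 ≤ Nv ^ 2 * r ^ 2)
    (heq : 2 * s ^ 2 - ρ * p ^ 2 = (2 * sstar ^ 2 - ρ * pstar ^ 2) * r ^ 2) :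
    s = sstar * r ∧ p = pstar * r := by
  have h1 : p ≤ t * s + Nv * r := by
    nlinarith [mul_nonneg hNvpos.le hr.le]
  have h2 : (0:ℝ) < t * s + Nv * r + p := by
    have := mul_nonneg htpos.le hs; have := mul_pos hNvpos hr; linarith
  have hE1 := aux_hE ρ t Nv sstar pstar r s p keyA keyB
  have hterm1 : (0:ℝ) ≤ ((t * s + Nv * r) ^ 2 - p ^ 2) := by
    nlinarith [mul_nonneg (by linarith : (0:ℝ) ≤ t * s + Nv * r - p) h2.le]
  have hterm2 : (0:ℝ) ≤ (s - sstar * r) ^ 2 := sq_nonneg _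
  have hc2 : (0:ℝ) < 2 - ρ * t ^ 2 := by linarith
  have hf1 : (0:ℝ) ≤ ρ * ((t * s + Nv * r) ^ 2 - p ^ 2) := mul_nonneg hρ.le hterm1
  have hsum0 : ρ * ((t * s + Nv * r) ^ 2 - p ^ 2) + (2 - ρ * t ^ 2) * (s - sstar * r) ^ 2 = 0 := by
    linarith
  have hzero1 : (s - sstar * r) ^ 2 = 0 := by
    by_contra hne
    have h3 : 0 < (s - sstar * r) ^ 2 := lt_of_le_of_ne hterm2 (Ne.symm hne)
    nlinarith [mul_pos hc2 h3]
  have hseq : s = sstar * r := by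
    have := pow_eq_zero_iff (n := 2) (by norm_num) |>.mp hzero1
    linarith [sub_eq_zero.mp this]
  refine ⟨hseq, ?_⟩
  have hzero2 : (t * s + Nv * r) ^ 2 - p ^ 2 = 0 := by
    have h4 : (2 - ρ * t ^ 2) * (s - sstar * r) ^ 2 = 0 := by rw [hzero1]; ring
    have h5 : ρ * ((t * s + Nv * r) ^ 2 - p ^ 2) = 0 := by linarith
    rcases mul_eq_zero.mp h5 with h | h
    · exact absurd h (ne_of_gt hρ)
    · exact h
  have hpeq : p = t * s + Nv * r := by
    have h6 : (t * s + Nv * r - p) * (t * s + Nv * r + p) = 0 := by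
      linear_combination hzero2
    rcases mul_eq_zero.mp h6 with h | h
    · linarith
    · linarith
  rw [hpeq, hseq, keyB]; ring

set_option maxHeartbeats 1000000 in
theorem stmt_8 {n : ℕ} (hn : 0 < n) (ρ : ℝ) (hρ : 0 < ρ)
    (x : Fin n → ℝ) (hdesc : ∀ i j : Fin n, i ≤ j → x j ≤ x i)
    (hnonneg : ∀ i, 0 ≤ x i) (hnotmult : ∀ c : ℝ, x ≠ fun _ => c)
    (Δ αlo : ℝ)
    (hΔ : Δ = ((ρ / 2) * (∑ i, (x i) ^ 2) + n) ^ 2 - 2 * ρ * (∑ i, |x i|) ^ 2)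
    (hαlo : αlo = ((ρ / 2) * (∑ i, (x i) ^ 2) + n) - Real.sqrt Δ)
    (wlo : Fin n → ℝ) (hwlo : ∀ i, wlo i = x i - αlo / (ρ * ∑ j, |x j|))
    (hlast : αlo / (ρ * ∑ j, |x j|) < x ⟨n - 1, Nat.sub_lt hn Nat.one_pos⟩)
    (ws : Fin n → ℝ) (hws : ws = (l2norm wlo)⁻¹ • wlo) :
    ((∑ i, (ws i) ^ 2 = 1) ∧ (∀ i, 0 ≤ ws i) ∧
      (∀ w : Fin n → ℝ, (∑ i, (w i) ^ 2 = 1) → (∀ i, 0 ≤ w i) →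
        (1 / 2) * ∑ i, ∑ j, (2 - ρ * x i * x j) * ws i * ws j ≤
          (1 / 2) * ∑ i, ∑ j, (2 - ρ * x i * x j) * w i * w j)) ∧
    proxSet ρ h2 x = {(∑ i, x i * ws i) • ws} := by
  have hS1abs : (∑ j, |x j|) = ∑ j, x j :=
    Finset.sum_congr rfl (fun i _ => abs_of_nonneg (hnonneg i))
  rw [hS1abs] at hΔ hwlo hlast
  set S1 : ℝ := ∑ j, x j with hS1def
  clear_value S1
  set S2 : ℝ := ∑ i, (x i) ^ 2 with hS2def
  clear_value S2
  set t : ℝ := αlo / (ρ * S1) with htdef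
  clear_value t
  -- nonconstancy
  obtain ⟨j0, hj0⟩ : ∃ j, x j ≠ x ⟨0, hn⟩ := by
    by_contra h
    push_neg at h
    exact hnotmult (x ⟨0, hn⟩) (funext h)
  -- S1 > 0
  have hS1pos : 0 < S1 := by
    rw [hS1def]
    have h1 : 0 < x j0 ∨ 0 < x ⟨0, hn⟩ := by
      rcases lt_or_eq_of_le (hnonneg j0) with h | h
      · exact Or.inl h
      rcases lt_or_eq_of_le (hnonneg ⟨0, hn⟩) with h2 | h2
      · exact Or.inr h2
      · exact absurd (h2 ▸ h.symm ▸ rfl) hj0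
    rcases h1 with h | h
    · exact lt_of_lt_of_le h (Finset.single_le_sum (fun i _ => hnonneg i) (Finset.mem_univ j0))
    · exact lt_of_lt_of_le h (Finset.single_le_sum (fun i _ => hnonneg i) (Finset.mem_univ (⟨0, hn⟩ : Fin n)))
  -- strict Cauchy-Schwarz
  have hstrict : S1 ^ 2 < n * S2 := by
    have hdd : ∑ i, ∑ j, (x i - x j) ^ 2 = 2 * ((n : ℝ) * S2 - S1 ^ 2) := by
      have h1 : ∀ i : Fin n, ∑ j, (x i - x j) ^ 2 = (n : ℝ) * (x i) ^ 2 - 2 * x i * S1 + S2 := by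
        intro i
        have : ∀ j : Fin n, (x i - x j) ^ 2 = (x i) ^ 2 - 2 * x i * x j + (x j) ^ 2 := by
          intro j; ring
        rw [Finset.sum_congr rfl (fun j _ => this j)]
        rw [Finset.sum_add_distrib, Finset.sum_sub_distrib, Finset.sum_const,
          Finset.card_univ, Fintype.card_fin, ← Finset.mul_sum, ← hS1def, ← hS2def]
        push_cast; ring
      rw [Finset.sum_congr rfl (fun i _ => h1 i)]
      have ha : ∑ i, ((n : ℝ) * (x i) ^ 2 - 2 * x i * S1 + S2) =
          (∑ i, (n : ℝ) * (x i) ^ 2) - (∑ i, 2 * x i * S1) + (∑ _i : Fin n, S2) := by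
        rw [Finset.sum_add_distrib, Finset.sum_sub_distrib]
      have hb : ∑ i, (n : ℝ) * (x i) ^ 2 = (n : ℝ) * S2 := by
        rw [← Finset.mul_sum, ← hS2def]
      have hc' : ∑ i, 2 * x i * S1 = 2 * S1 * S1 := by
        have h2 : ∀ i : Fin n, 2 * x i * S1 = (2 * S1) * x i := fun i => by ring
        rw [Finset.sum_congr rfl (fun i _ => h2 i), ← Finset.mul_sum, ← hS1def]
      have hd : ∑ _i : Fin n, S2 = (n : ℝ) * S2 := by
        rw [Finset.sum_const, Finset.card_univ, Fintype.card_fin, nsmul_eq_mul]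
      rw [ha, hb, hc', hd]; ring
    have hpos : 0 < ∑ i, ∑ j, (x i - x j) ^ 2 := by
      have h2 : (0:ℝ) < (x j0 - x ⟨0, hn⟩) ^ 2 := by
        have := sub_ne_zero_of_ne hj0
        positivity
      have h3 : (x j0 - x ⟨0, hn⟩) ^ 2 ≤ ∑ j, (x j0 - x j) ^ 2 :=
        Finset.single_le_sum (f := fun j => (x j0 - x j) ^ 2)
          (fun j _ => sq_nonneg _) (Finset.mem_univ _)
      have h4 : ∑ j, (x j0 - x j) ^ 2 ≤ ∑ i, ∑ j, (x i - x j) ^ 2 :=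
        Finset.single_le_sum (f := fun i => ∑ j, (x i - x j) ^ 2)
          (fun i _ => Finset.sum_nonneg fun j _ => sq_nonneg _) (Finset.mem_univ j0)
      linarith
    rw [hdd] at hpos
    linarith
  have hnn : (0:ℝ) < n := by exact_mod_cast hn
  have hS2pos : 0 < S2 := by nlinarith [sq_nonneg S1]
  -- Δ > 0
  have hΔpos : 0 < Δ := by
    rw [hΔ]
    nlinarith [sq_nonneg (ρ / 2 * S2 - n), mul_pos hρ (by linarith : (0:ℝ) < n * S2 - S1 ^ 2)]
  have hsqΔ : Real.sqrt Δ ^ 2 = Δ := Real.sq_sqrt hΔpos.le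
  have hsqΔpos : 0 < Real.sqrt Δ := Real.sqrt_pos.mpr hΔpos
  -- root equation
  have root : αlo ^ 2 - (ρ * S2 + 2 * n) * αlo + 2 * ρ * S1 ^ 2 = 0 := by
    rw [hαlo]
    linear_combination hsqΔ + hΔ
  have hαltK : αlo < ρ / 2 * S2 + n := by rw [hαlo]; linarith
  have hαpos : 0 < αlo := by
    rw [hαlo]
    have hK : (0:ℝ) < ρ / 2 * S2 + n := by positivity
    have : Real.sqrt Δ < ρ / 2 * S2 + n := by
      apply (Real.sqrt_lt' hK).mpr
      rw [hΔ]; nlinarith [mul_pos hρ (mul_pos hS1pos hS1pos)]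
    linarith
  have hα2 : αlo ^ 2 < 2 * ρ * S1 ^ 2 := by
    nlinarith [mul_pos hαpos (show (0:ℝ) < ρ * S2 + 2 * n - 2 * αlo by linarith)]
  have hρS1 : 0 < ρ * S1 := mul_pos hρ hS1pos
  have htS1 : ρ * S1 * t = αlo := by
    rw [htdef]; field_simp
  have htpos : 0 < t := by
    rw [htdef]; positivity
  have hc : ρ * t ^ 2 < 2 := by
    have h1 : ρ ^ 2 * S1 ^ 2 * t ^ 2 = αlo ^ 2 := by
      linear_combination (ρ * S1 * t + αlo) * htS1
    nlinarith [mul_pos hρ (mul_pos hS1pos hS1pos)]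
  -- componentwise positivity
  have hti : ∀ i, t < x i := by
    intro i
    have hle : (⟨n - 1, Nat.sub_lt hn Nat.one_pos⟩ : Fin n).val ≥ i.val := Nat.le_sub_one_of_lt i.isLt
    exact lt_of_lt_of_le hlast (hdesc i ⟨n - 1, Nat.sub_lt hn Nat.one_pos⟩ hle)
  have hvpos : ∀ i, 0 < wlo i := fun i => by rw [hwlo i]; linarith [hti i]
  have hxpos : ∀ i, 0 < x i := fun i => lt_trans htpos (hti i)
  set Nsq : ℝ := ∑ i, (wlo i) ^ 2 with hNsqdef
  clear_value Nsq
  have hNsqpos : 0 < Nsq := by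
    rw [hNsqdef]
    exact Finset.sum_pos (fun i _ => pow_pos (hvpos i) 2) ⟨⟨0, hn⟩, Finset.mem_univ _⟩
  set Nv : ℝ := l2norm wlo with hNvdef
  clear_value Nv
  have hNvsq : Nv ^ 2 = Nsq := by
    rw [hNvdef, l2norm, ← hNsqdef, Real.sq_sqrt hNsqpos.le]
  have hNvpos : 0 < Nv := by
    rw [hNvdef, l2norm]
    exact Real.sqrt_pos.mpr (hNsqdef ▸ hNsqpos)
  -- sum formulas
  have hsumv : ∑ i, wlo i = S1 - n * t := by
    rw [Finset.sum_congr rfl (fun i _ => hwlo i), Finset.sum_sub_distrib, Finset.sum_const,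
      Finset.card_univ, Fintype.card_fin, ← hS1def, nsmul_eq_mul]
  have hsumxv : ∑ i, x i * wlo i = S2 - t * S1 := by
    have h1 : ∀ i : Fin n, x i * wlo i = (x i) ^ 2 - t * x i := by
      intro i; rw [hwlo i]; ring
    rw [Finset.sum_congr rfl (fun i _ => h1 i), Finset.sum_sub_distrib, ← Finset.mul_sum,
      ← hS1def, ← hS2def]
  have hNsqeq : Nsq = S2 - 2 * t * S1 + n * t ^ 2 := by
    have h1 : ∀ i : Fin n, (wlo i) ^ 2 = (x i) ^ 2 - 2 * t * x i + t ^ 2 := by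
      intro i; rw [hwlo i]; ring
    rw [hNsqdef, Finset.sum_congr rfl (fun i _ => h1 i), Finset.sum_add_distrib,
      Finset.sum_sub_distrib, ← Finset.mul_sum, Finset.sum_const, Finset.card_univ,
      Fintype.card_fin, ← hS1def, ← hS2def, nsmul_eq_mul]
  set sstar : ℝ := ∑ i, ws i with hsstardef
  clear_value sstar
  set pstar : ℝ := ∑ i, x i * ws i with hpstardef
  clear_value pstar
  have hwsi : ∀ i, ws i = Nv⁻¹ * wlo i := by
    intro i; rw [hws]; simp [hNvdef]
  have hsumws : sstar = Nv⁻¹ * (S1 - n * t) := by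
    rw [hsstardef, Finset.sum_congr rfl (fun i _ => hwsi i), ← Finset.mul_sum, hsumv]
  have hsumxws : pstar = Nv⁻¹ * (S2 - t * S1) := by
    have h1 : ∀ i : Fin n, x i * ws i = Nv⁻¹ * (x i * wlo i) := by
      intro i; rw [hwsi i]; ring
    rw [hpstardef, Finset.sum_congr rfl (fun i _ => h1 i), ← Finset.mul_sum, hsumxv]
  have hNvne : Nv ≠ 0 := ne_of_gt hNvpos
  -- key algebraic relations
  have keyB : pstar = t * sstar + Nv := by
    rw [hsumxws, hsumws]
    have h1 : (S2 - t * S1) - t * (S1 - n * t) = Nv ^ 2 := by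
      rw [hNvsq, hNsqeq]; ring
    field_simp
    linear_combination h1
  have keyA0 : 2 * (S1 - n * t) = ρ * t * (S2 - t * S1) := by
    have root_t : (ρ * S1 * t) ^ 2 - (ρ * S2 + 2 * n) * (ρ * S1 * t) + 2 * ρ * S1 ^ 2 = 0 := by
      rw [htS1]; exact root
    have h2 : ρ * S1 * (2 * (S1 - n * t) - ρ * t * (S2 - t * S1)) = 0 := by
      linear_combination root_t
    rcases mul_eq_zero.mp h2 with h | h
    · exact absurd h (ne_of_gt hρS1)
    · linarith
  have keyA : 2 * sstar = ρ * t * pstar := by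
    rw [hsumws, hsumxws]
    linear_combination Nv⁻¹ * keyA0
  have hsstarpos : 0 < sstar := by
    rw [hsstardef]
    exact Finset.sum_pos (fun i _ => by
      rw [hwsi i]; exact mul_pos (inv_pos.mpr hNvpos) (hvpos i)) ⟨⟨0, hn⟩, Finset.mem_univ _⟩
  have hpstarpos : 0 < pstar := by
    rw [hpstardef]
    refine Finset.sum_pos (fun i _ => ?_) ⟨⟨0, hn⟩, Finset.mem_univ _⟩
    rw [hwsi i]
    exact mul_pos (hxpos i) (mul_pos (inv_pos.mpr hNvpos) (hvpos i))
  have keyIneq := fun r s p hr hs hp hcs =>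
    aux_ineq ρ t Nv sstar pstar r s p hρ htpos hNvpos hc keyA keyB hr hs hp hcs
  have keyEq := fun r s p hr hs hp hcs heq =>
    aux_eq ρ t Nv sstar pstar r s p hρ htpos hNvpos hc keyA keyB hr hs hp hcs heq
  -- expansion of the quadratic form
  have expand : ∀ w : Fin n → ℝ, ∑ i, ∑ j, (2 - ρ * x i * x j) * w i * w j
      = 2 * (∑ i, w i) ^ 2 - ρ * (∑ i, x i * w i) ^ 2 := by
    intro w
    have h1 : (∑ i, w i) ^ 2 = ∑ i, ∑ j, w i * w j := by
      rw [sq, Finset.sum_mul_sum]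
    have h2 : (∑ i, x i * w i) ^ 2 = ∑ i, ∑ j, (x i * w i) * (x j * w j) := by
      rw [sq, Finset.sum_mul_sum]
    rw [h1, h2, Finset.mul_sum, Finset.mul_sum, ← Finset.sum_sub_distrib]
    refine Finset.sum_congr rfl (fun i _ => ?_)
    rw [Finset.mul_sum, Finset.mul_sum, ← Finset.sum_sub_distrib]
    exact Finset.sum_congr rfl (fun j _ => by ring)
  have hwsnn : ∀ i, 0 ≤ ws i := fun i => by
    rw [hwsi i]; exact mul_nonneg (inv_pos.mpr hNvpos).le (hvpos i).le
  have hws2 : ∑ i, (ws i) ^ 2 = 1 := by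
    have h1 : ∀ i : Fin n, (ws i) ^ 2 = Nv⁻¹ ^ 2 * (wlo i) ^ 2 := fun i => by
      rw [hwsi i]; ring
    rw [Finset.sum_congr rfl (fun i _ => h1 i), ← Finset.mul_sum, ← hNsqdef, ← hNvsq]
    field_simp
  -- the value of the objective at ustar
  have hustar_ne : (pstar • ws) ≠ 0 := by
    intro h0
    have h1 : (pstar • ws) ⟨0, hn⟩ = 0 := by rw [h0]; rfl
    rw [Pi.smul_apply, smul_eq_mul] at h1
    have h2 : 0 < ws ⟨0, hn⟩ := by
      rw [hwsi ⟨0, hn⟩]; exact mul_pos (inv_pos.mpr hNvpos) (hvpos _)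
    linarith only [h1, mul_pos hpstarpos h2]
  have hsum_us_sq : ∑ i, ((pstar • ws) i - x i) ^ 2 = S2 - pstar ^ 2 := by
    have h1 : ∀ i : Fin n, ((pstar • ws) i - x i) ^ 2 =
        pstar ^ 2 * (ws i) ^ 2 - 2 * pstar * (x i * ws i) + (x i) ^ 2 := fun i => by
      rw [Pi.smul_apply, smul_eq_mul]; ring
    rw [Finset.sum_congr rfl (fun i _ => h1 i), Finset.sum_add_distrib,
      Finset.sum_sub_distrib, ← Finset.mul_sum, ← Finset.mul_sum, hws2,
      ← hpstardef, ← hS2def]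
    ring
  have hh2star : h2 (pstar • ws) = sstar ^ 2 := by
    rw [h2, if_neg hustar_ne]
    have hl1 : l1norm (pstar • ws) = pstar * sstar := by
      rw [l1norm]
      have h1 : ∀ i : Fin n, |(pstar • ws) i| = pstar * ws i := fun i => by
        rw [Pi.smul_apply, smul_eq_mul]
        exact abs_of_nonneg (mul_nonneg hpstarpos.le (hwsnn i))
      rw [Finset.sum_congr rfl (fun i _ => h1 i), ← Finset.mul_sum, ← hsstardef]
    have hl2 : l2norm (pstar • ws) = pstar := by
      rw [l2norm]
      have h1 : ∀ i : Fin n, ((pstar • ws) i) ^ 2 = pstar ^ 2 * (ws i) ^ 2 := fun i => by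
        rw [Pi.smul_apply, smul_eq_mul]; ring
      rw [Finset.sum_congr rfl (fun i _ => h1 i), ← Finset.mul_sum, hws2, mul_one,
        Real.sqrt_sq hpstarpos.le]
    rw [hl1, hl2, mul_comm, mul_div_assoc, div_self (ne_of_gt hpstarpos), mul_one]
  have hFstar : ρ / 2 * (∑ i, ((pstar • ws) i - x i) ^ 2) + h2 (pstar • ws)
      = ρ / 2 * S2 + (sstar ^ 2 - ρ / 2 * pstar ^ 2) := by
    rw [hsum_us_sq, hh2star]; ring
  have keyA2 : 4 * sstar ^ 2 = ρ ^ 2 * t ^ 2 * pstar ^ 2 := by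
    linear_combination (2 * sstar + ρ * t * pstar) * keyA
  have hgstarneg : sstar ^ 2 - ρ / 2 * pstar ^ 2 < 0 := by
    have f5 := mul_pos (mul_pos hρ (pow_pos hpstarpos 2))
      (show (0:ℝ) < 2 - ρ * t ^ 2 by linarith only [hc])
    have f4 : ρ * pstar ^ 2 * (2 - ρ * t ^ 2) = 2 * ρ * pstar ^ 2 - ρ ^ 2 * t ^ 2 * pstar ^ 2 := by
      ring
    linarith only [f5, f4, keyA2]
  -- lower bound for the prox objective
  have LB : ∀ u : Fin n → ℝ, ρ / 2 * S2 + (sstar ^ 2 - ρ / 2 * pstar ^ 2) ≤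
      ρ / 2 * (∑ i, (u i - x i) ^ 2) + h2 u := by
    intro u
    by_cases hu0 : u = 0
    · subst hu0
      rw [h2, if_pos rfl]
      have h1 : ∑ i, ((0 : Fin n → ℝ) i - x i) ^ 2 = S2 := by
        rw [hS2def]
        exact Finset.sum_congr rfl (fun i _ => by simp)
      rw [h1]
      linarith
    · have hex : ∃ i1, u i1 ≠ 0 := by
        by_contra h; push_neg at h; exact hu0 (funext h)
      obtain ⟨i1, hi1⟩ := hex
      have hrsqpos : 0 < ∑ i, (u i) ^ 2 := by
        refine Finset.sum_pos' (fun i _ => sq_nonneg _) ⟨i1, Finset.mem_univ i1, ?_⟩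
        exact lt_of_le_of_ne (sq_nonneg _) (Ne.symm (pow_ne_zero 2 hi1))
      set rsq : ℝ := ∑ i, (u i) ^ 2 with hrsqdef
      set r : ℝ := Real.sqrt rsq with hrdef
      have hr2 : r ^ 2 = rsq := Real.sq_sqrt hrsqpos.le
      have hrpos : 0 < r := Real.sqrt_pos.mpr hrsqpos
      set s0 : ℝ := ∑ i, |u i| with hs0def
      set p0 : ℝ := ∑ i, x i * |u i| with hp0def
      set sxu : ℝ := ∑ i, x i * u i with hsxudef
      have hs0 : 0 ≤ s0 := Finset.sum_nonneg (fun i _ => abs_nonneg _)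
      have hp0 : 0 ≤ p0 :=
        Finset.sum_nonneg (fun i _ => mul_nonneg (hnonneg i) (abs_nonneg _))
      have hxu : sxu ≤ p0 := by
        rw [hsxudef, hp0def]
        exact Finset.sum_le_sum (fun i _ =>
          mul_le_mul_of_nonneg_left (le_abs_self _) (hnonneg i))
      have habs2 : ∑ i, |u i| ^ 2 = rsq := by
        rw [hrsqdef]; exact Finset.sum_congr rfl (fun i _ => sq_abs _)
      have hvw : ∑ i, wlo i * |u i| = p0 - t * s0 := by
        have h1 : ∀ i : Fin n, wlo i * |u i| = x i * |u i| - t * |u i| := fun i => by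
          rw [hwlo i]; ring
        rw [Finset.sum_congr rfl (fun i _ => h1 i), Finset.sum_sub_distrib,
          ← Finset.mul_sum, ← hs0def, ← hp0def]
      have hcs : (p0 - t * s0) ^ 2 ≤ Nv ^ 2 * r ^ 2 := by
        have h1 := Finset.sum_mul_sq_le_sq_mul_sq Finset.univ wlo (fun i => |u i|)
        rw [hvw, habs2, ← hNsqdef] at h1
        rw [hNvsq, hr2]
        exact h1
      have hkey := keyIneq r s0 p0 hrpos.le hs0 hp0 hcs
      rw [hr2] at hkey
      have hexp : ∑ i, (u i - x i) ^ 2 = rsq - 2 * sxu + S2 := by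
        have h1 : ∀ i : Fin n, (u i - x i) ^ 2 = (u i) ^ 2 - 2 * (x i * u i) + (x i) ^ 2 :=
          fun i => by ring
        rw [Finset.sum_congr rfl (fun i _ => h1 i), Finset.sum_add_distrib,
          Finset.sum_sub_distrib, ← Finset.mul_sum, ← hrsqdef, ← hsxudef, ← hS2def]
      have hh2u : h2 u = s0 ^ 2 / rsq := by
        rw [h2, if_neg hu0, l1norm, l2norm, div_pow, ← hs0def, ← hrsqdef,
          Real.sq_sqrt hrsqpos.le]
      rw [hexp, hh2u]
      have hd : s0 ^ 2 / rsq * rsq = s0 ^ 2 := div_mul_cancel₀ _ (ne_of_gt hrsqpos)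
      have hdnn : 0 ≤ s0 ^ 2 / rsq := div_nonneg (sq_nonneg _) hrsqpos.le
      have hmain : (sstar ^ 2 - ρ / 2 * pstar ^ 2) * rsq ≤
          (ρ / 2 * rsq - ρ * sxu + s0 ^ 2 / rsq) * rsq := by
        have f1 : 0 ≤ ρ / 2 * (rsq - p0) ^ 2 :=
          mul_nonneg (by linarith) (sq_nonneg _)
        have f2' : ρ * sxu * rsq ≤ ρ * p0 * rsq := by
          have h9 := mul_le_mul_of_nonneg_left hxu hρ.le
          exact mul_le_mul_of_nonneg_right h9 hrsqpos.le
        have f3 : ρ / 2 * (rsq - p0) ^ 2 = ρ / 2 * rsq ^ 2 - ρ * p0 * rsq + ρ / 2 * p0 ^ 2 := by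
          ring
        have f4 : (sstar ^ 2 - ρ / 2 * pstar ^ 2) * rsq =
            (2 * sstar ^ 2 - ρ * pstar ^ 2) * rsq / 2 := by ring
        have f6 : (ρ / 2 * rsq - ρ * sxu + s0 ^ 2 / rsq) * rsq =
            ρ / 2 * rsq ^ 2 - ρ * sxu * rsq + s0 ^ 2 / rsq * rsq := by ring
        linarith only [hkey, f1, f2', f3, f4, f6, hd]
      have := le_of_mul_le_mul_right (by linarith [hmain] :
        (sstar ^ 2 - ρ / 2 * pstar ^ 2) * rsq ≤ (ρ / 2 * rsq - ρ * sxu + s0 ^ 2 / rsq) * rsq) hrsqpos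
      linarith
  refine ⟨⟨hws2, hwsnn, ?_⟩, ?_⟩
  · -- sphere minimization
    intro w hw1 hwpos
    rw [expand ws, expand w, ← hsstardef, ← hpstardef]
    have hs : 0 ≤ ∑ i, w i := Finset.sum_nonneg (fun i _ => hwpos i)
    have hp : 0 ≤ ∑ i, x i * w i :=
      Finset.sum_nonneg (fun i _ => mul_nonneg (hnonneg i) (hwpos i))
    have hvw : ∑ i, wlo i * w i = (∑ i, x i * w i) - t * (∑ i, w i) := by
      have h1 : ∀ i : Fin n, wlo i * w i = x i * w i - t * w i := fun i => by
        rw [hwlo i]; ring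
      rw [Finset.sum_congr rfl (fun i _ => h1 i), Finset.sum_sub_distrib, ← Finset.mul_sum]
    have hcs : ((∑ i, x i * w i) - t * (∑ i, w i)) ^ 2 ≤ Nv ^ 2 * 1 ^ 2 := by
      have h1 := Finset.sum_mul_sq_le_sq_mul_sq Finset.univ wlo w
      rw [hvw, hw1, ← hNsqdef] at h1
      rw [hNvsq, one_pow]
      simpa using h1
    have := keyIneq 1 (∑ i, w i) (∑ i, x i * w i) (by norm_num) hs hp hcs
    rw [one_pow, mul_one] at this
    linarith
  · -- the prox set
    ext u
    simp only [proxSet, Set.mem_setOf_eq, Set.mem_singleton_iff]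
    constructor
    · intro hu
      have hu1 := hu (pstar • ws)
      rw [hFstar] at hu1
      have hune : u ≠ 0 := by
        intro h0
        rw [h0] at hu1
        rw [h2, if_pos rfl] at hu1
        have h1 : ∑ i, ((0 : Fin n → ℝ) i - x i) ^ 2 = S2 := by
          rw [hS2def]
          exact Finset.sum_congr rfl (fun i _ => by simp)
        rw [h1] at hu1
        linarith
      have hex : ∃ i1, u i1 ≠ 0 := by
        by_contra h; push_neg at h; exact hune (funext h)
      obtain ⟨i1, hi1⟩ := hex
      have hrsqpos : 0 < ∑ i, (u i) ^ 2 := by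
        refine Finset.sum_pos' (fun i _ => sq_nonneg _) ⟨i1, Finset.mem_univ i1, ?_⟩
        exact lt_of_le_of_ne (sq_nonneg _) (Ne.symm (pow_ne_zero 2 hi1))
      set rsq : ℝ := ∑ i, (u i) ^ 2 with hrsqdef
      set r : ℝ := Real.sqrt rsq with hrdef
      have hr2 : r ^ 2 = rsq := Real.sq_sqrt hrsqpos.le
      have hrpos : 0 < r := Real.sqrt_pos.mpr hrsqpos
      set s0 : ℝ := ∑ i, |u i| with hs0def
      set p0 : ℝ := ∑ i, x i * |u i| with hp0def
      set sxu : ℝ := ∑ i, x i * u i with hsxudef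
      have hs0 : 0 ≤ s0 := Finset.sum_nonneg (fun i _ => abs_nonneg _)
      have hp0 : 0 ≤ p0 :=
        Finset.sum_nonneg (fun i _ => mul_nonneg (hnonneg i) (abs_nonneg _))
      have hxu : sxu ≤ p0 := by
        rw [hsxudef, hp0def]
        exact Finset.sum_le_sum (fun i _ =>
          mul_le_mul_of_nonneg_left (le_abs_self _) (hnonneg i))
      have habs2 : ∑ i, |u i| ^ 2 = rsq := by
        rw [hrsqdef]; exact Finset.sum_congr rfl (fun i _ => sq_abs _)
      have hvw : ∑ i, wlo i * |u i| = p0 - t * s0 := by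
        have h1 : ∀ i : Fin n, wlo i * |u i| = x i * |u i| - t * |u i| := fun i => by
          rw [hwlo i]; ring
        rw [Finset.sum_congr rfl (fun i _ => h1 i), Finset.sum_sub_distrib,
          ← Finset.mul_sum, ← hs0def, ← hp0def]
      have hcs : (p0 - t * s0) ^ 2 ≤ Nv ^ 2 * r ^ 2 := by
        have h1 := Finset.sum_mul_sq_le_sq_mul_sq Finset.univ wlo (fun i => |u i|)
        rw [hvw, habs2, ← hNsqdef] at h1
        rw [hNvsq, hr2]
        exact h1
      have hkey := keyIneq r s0 p0 hrpos.le hs0 hp0 hcs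
      rw [hr2] at hkey
      have hexp : ∑ i, (u i - x i) ^ 2 = rsq - 2 * sxu + S2 := by
        have h1 : ∀ i : Fin n, (u i - x i) ^ 2 = (u i) ^ 2 - 2 * (x i * u i) + (x i) ^ 2 :=
          fun i => by ring
        rw [Finset.sum_congr rfl (fun i _ => h1 i), Finset.sum_add_distrib,
          Finset.sum_sub_distrib, ← Finset.mul_sum, ← hrsqdef, ← hsxudef, ← hS2def]
      have hh2u : h2 u = s0 ^ 2 / rsq := by
        rw [h2, if_neg hune, l1norm, l2norm, div_pow, ← hs0def, ← hrsqdef,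
          Real.sq_sqrt hrsqpos.le]
      rw [hexp, hh2u] at hu1
      have hLB := LB u
      rw [hexp, hh2u] at hLB
      have hFu : ρ / 2 * (rsq - 2 * sxu + S2) + s0 ^ 2 / rsq =
          ρ / 2 * S2 + (sstar ^ 2 - ρ / 2 * pstar ^ 2) := le_antisymm hu1 hLB
      have heq0 : ρ / 2 * rsq - ρ * sxu + s0 ^ 2 / rsq = sstar ^ 2 - ρ / 2 * pstar ^ 2 := by
        linarith
      have hd : s0 ^ 2 / rsq * rsq = s0 ^ 2 := div_mul_cancel₀ _ (ne_of_gt hrsqpos)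
      have hzero : ρ * (p0 - sxu) * rsq + ρ / 2 * (rsq - p0) ^ 2 +
          (s0 ^ 2 - ρ / 2 * p0 ^ 2 - (sstar ^ 2 - ρ / 2 * pstar ^ 2) * rsq) = 0 := by
        linear_combination rsq * heq0 - hd
      have hA1nn : 0 ≤ ρ * (p0 - sxu) * rsq :=
        mul_nonneg (mul_nonneg hρ.le (by linarith)) hrsqpos.le
      have hA2nn : 0 ≤ ρ / 2 * (rsq - p0) ^ 2 := mul_nonneg (by linarith) (sq_nonneg _)
      have hA3nn : 0 ≤ s0 ^ 2 - ρ / 2 * p0 ^ 2 - (sstar ^ 2 - ρ / 2 * pstar ^ 2) * rsq := by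
        linarith
      have hA1 : ρ * (p0 - sxu) * rsq = 0 := by linarith
      have hA2 : ρ / 2 * (rsq - p0) ^ 2 = 0 := by linarith
      have hA3 : s0 ^ 2 - ρ / 2 * p0 ^ 2 - (sstar ^ 2 - ρ / 2 * pstar ^ 2) * rsq = 0 := by
        linarith
      -- u is nonnegative
      have hp0sxu : p0 = sxu := by
        by_contra hne
        have hlt : sxu < p0 := lt_of_le_of_ne hxu (fun h => hne h.symm)
        have := mul_pos (mul_pos hρ (sub_pos.mpr hlt)) hrsqpos
        linarith
      have huabs : ∀ i, |u i| = u i := by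
        have hsum0 : ∑ i, (x i * |u i| - x i * u i) = 0 := by
          rw [Finset.sum_sub_distrib, ← hp0def, ← hsxudef, hp0sxu, sub_self]
        have hterm := (Finset.sum_eq_zero_iff_of_nonneg (fun i _ => by
          have h1 : x i * u i ≤ x i * |u i| :=
            mul_le_mul_of_nonneg_left (le_abs_self _) (hnonneg i)
          linarith)).mp hsum0
        intro i
        have h2 := hterm i (Finset.mem_univ i)
        have h3 : x i * (|u i| - u i) = 0 := by linarith
        rcases mul_eq_zero.mp h3 with h | h
        · exact absurd h (ne_of_gt (hxpos i))
        · linarith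
      have hrsqp0 : rsq = p0 := by
        have h1 : (rsq - p0) ^ 2 = 0 := by
          rcases mul_eq_zero.mp hA2 with h | h
          · exfalso; linarith
          · exact h
        have h2 := pow_eq_zero_iff (n := 2) (by norm_num) |>.mp h1
        linarith
      have heqq : 2 * s0 ^ 2 - ρ * p0 ^ 2 = (2 * sstar ^ 2 - ρ * pstar ^ 2) * r ^ 2 := by
        rw [hr2]; linarith
      obtain ⟨hseq, hpeq⟩ := keyEq r s0 p0 hrpos hs0 hp0 hcs heqq
      have hrp : r = pstar := by
        have h1 : r * r = pstar * r := by
          have h9 : r ^ 2 = pstar * r := by rw [hr2, hrsqp0, hpeq]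
          linear_combination h9
        exact mul_right_cancel₀ (ne_of_gt hrpos) h1
      -- Cauchy-Schwarz equality
      have hcseq : ∑ i, wlo i * |u i| = Nv * r := by
        rw [hvw, hpeq, hseq, keyB]; ring
      have hzero3 : ∑ i, (Nv * |u i| - r * wlo i) ^ 2 = 0 := by
        have h1 : ∀ i : Fin n, (Nv * |u i| - r * wlo i) ^ 2 =
            Nv ^ 2 * |u i| ^ 2 - 2 * Nv * r * (wlo i * |u i|) + r ^ 2 * (wlo i) ^ 2 :=
          fun i => by ring
        rw [Finset.sum_congr rfl (fun i _ => h1 i), Finset.sum_add_distrib,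
          Finset.sum_sub_distrib, ← Finset.mul_sum, ← Finset.mul_sum, ← Finset.mul_sum,
          habs2, hcseq, ← hNsqdef, ← hNvsq, ← hr2]
        ring
      have hfin : ∀ i, Nv * |u i| - r * wlo i = 0 := by
        intro i
        have h1 := (Finset.sum_eq_zero_iff_of_nonneg
          (fun i _ => sq_nonneg (Nv * |u i| - r * wlo i))).mp hzero3 i (Finset.mem_univ i)
        exact pow_eq_zero_iff (n := 2) (by norm_num) |>.mp h1
      funext i
      have h1 := hfin i
      rw [huabs i] at h1
      rw [Pi.smul_apply, smul_eq_mul, hwsi i]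
      have h2 : u i = r * wlo i / Nv := by
        field_simp at h1 ⊢
        linarith
      rw [h2, hrp]
      field_simp
    · intro hu
      subst hu
      intro v
      rw [hFstar]
      exact LB v
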